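/- Let K be a field with a nontrivial Krull valuation v into a linearly ordered abelian group Γ, and let A(x) = Σ_{i=0}^n a_i x^i ∈ K[x] be a polynomial of degree n. If at least one of the two polynomials U(A(x)) = A(x − a_{n−1}/(n a_n)) or L(A(x)) = Σ_{i=0}^n a_i x^i (1 − (a_1/(n a_0))x)^{n−i} is an Eisenstein–Dumas polynomial at v, then A(x) is irreducible in K[x]. -/

import Mathlib

open Polynomial

/-- A Krull valuation on a field `K` with values in `Γ ∪ {∞}` (here `WithTop Γ`), where `Γ` is a
linearly ordered abelian group: `v a = ∞ ↔ a = 0`, `v (a*b) = v a + v b`, and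
`v (a+b) ≥ min (v a) (v b)`. -/
structure KrullValuation (K : Type*) [Field K] (Γ : Type*) [AddCommGroup Γ] [LinearOrder Γ] [IsOrderedAddMonoid Γ] where
  v : K → WithTop Γ
  eq_top_iff : ∀ a : K, v a = ⊤ ↔ a = 0
  map_mul : ∀ a b : K, v (a * b) = v a + v b
  min_le_add : ∀ a b : K, min (v a) (v b) ≤ v (a + b)

variable {K : Type*} [Field K] {Γ : Type*} [AddCommGroup Γ] [LinearOrder Γ] [IsOrderedAddMonoid Γ]

/-- The valuation `w` is nontrivial. -/
def KrullValuation.IsNontrivial (w : KrullValuation K Γ) : Prop :=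
  ∃ a : K, a ≠ 0 ∧ w.v a ≠ 0

/-- `A` is an Eisenstein–Dumas polynomial of degree `n` at the valuation `w`:
(D0) `a₀ * aₙ ≠ 0`, (D1) `v(a₀) − v(aₙ) ∉ kΓ` for every integer `k > 1` dividing `n`
(stated as: `v(a₀) ≠ v(aₙ) + k•g` for all `g ∈ Γ`),
(D2) `n·v(aᵢ) ≥ (n−i)·v(a₀) + i·v(aₙ)` for `0 ≤ i ≤ n`. -/
def IsEisensteinDumas (w : KrullValuation K Γ) (n : ℕ) (A : K[X]) : Prop :=
  A.natDegree = n ∧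
  A.coeff 0 * A.coeff n ≠ 0 ∧
  (∀ k : ℕ, 1 < k → k ∣ n → ∀ g : Γ,
    w.v (A.coeff 0) ≠ w.v (A.coeff n) + ((k • g : Γ) : WithTop Γ)) ∧
  (∀ i ≤ n, (n - i) • w.v (A.coeff 0) + i • w.v (A.coeff n) ≤ n • w.v (A.coeff i))

/-- For `A = Σ aᵢ xⁱ` of degree `n`, `U(A(x)) := A(x − a_{n−1}/(n·aₙ))`. -/
noncomputable def Upoly (n : ℕ) (A : K[X]) : K[X] :=
  A.comp (X - C (A.coeff (n - 1) / ((n : K) * A.coeff n)))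

/-- For `A = Σ aᵢ xⁱ` of degree `n`,
`L(A(x)) := Σ_{i=0}^n aᵢ xⁱ (1 − (a₁/(n·a₀))x)^{n−i}`. -/
noncomputable def Lpoly (n : ℕ) (A : K[X]) : K[X] :=
  ∑ i ∈ Finset.range (n + 1),
    C (A.coeff i) * X ^ i * (1 - C (A.coeff 1 / ((n : K) * A.coeff 0)) * X) ^ (n - i)

namespace KrullValuation
variable (w : KrullValuation K Γ)

lemma v_zero : w.v 0 = ⊤ := (w.eq_top_iff 0).2 rfl

lemma v_ne_top {a : K} (ha : a ≠ 0) : w.v a ≠ ⊤ := fun ht => ha ((w.eq_top_iff a).1 ht)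

lemma v_one : w.v 1 = 0 := by
  have h := w.map_mul 1 1
  rw [one_mul] at h
  lift w.v 1 to Γ using w.v_ne_top one_ne_zero with γ hγ
  rw [← WithTop.coe_add, WithTop.coe_eq_coe] at h
  have h0 : γ = 0 := (add_left_cancel (a := γ) (b := 0) (c := γ) (by simpa using h.symm)).symm
  exact_mod_cast h0

lemma v_neg (a : K) : w.v (-a) = w.v a := by
  have h1 : w.v (-1 : K) = 0 := by
    have h := w.map_mul (-1) (-1)
    rw [neg_mul_neg, one_mul, w.v_one] at h
    lift w.v (-1 : K) to Γ using w.v_ne_top (by norm_num) with γ hγ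
    rw [← WithTop.coe_add, eq_comm, WithTop.coe_eq_zero] at h
    have h0 : γ = 0 := by
      by_contra hne
      rcases lt_or_gt_of_ne hne with hlt | hgt
      · exact absurd h (ne_of_lt (add_neg hlt hlt))
      · exact absurd h (ne_of_gt (add_pos hgt hgt))
    exact_mod_cast h0
  rw [show (-a : K) = (-1) * a by ring, w.map_mul, h1, zero_add]

lemma v_add_eq_left {a b : K} (h : w.v a < w.v b) : w.v (a + b) = w.v a := by
  refine le_antisymm ?_ (le_trans (by rw [min_eq_left h.le]) (w.min_le_add a b))
  have h2 : w.v a = w.v (a + b + -b) := by ring_nf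
  have h3 := le_trans (w.min_le_add (a + b) (-b)) (le_of_eq h2.symm)
  rw [w.v_neg] at h3
  rcases min_le_iff.1 h3 with h4 | h4
  · exact h4
  · exact absurd h4 (not_le.2 h)

lemma nsmul_top_eq {n : ℕ} (hn : n ≠ 0) : n • (⊤ : WithTop Γ) = ⊤ := by
  cases n with
  | zero => exact absurd rfl hn
  | succ m => rw [succ_nsmul, add_top]

lemma le_nsmul_v_sum {ι : Type*} (s : Finset ι) (f : ι → K) {n : ℕ} (hn : n ≠ 0) (m c : WithTop Γ)
    (h : ∀ i ∈ s, m ≤ n • w.v (f i) + c) : m ≤ n • w.v (∑ i ∈ s, f i) + c := by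
  classical
  induction s using Finset.induction_on with
  | empty =>
      rw [Finset.sum_empty, w.v_zero, nsmul_top_eq hn, top_add]
      exact le_top
  | @insert a s ha ih =>
      rw [Finset.sum_insert ha]
      have h1 := h a (Finset.mem_insert_self a s)
      have h2 := ih (fun i hi => h i (Finset.mem_insert_of_mem hi))
      have h3 : min (w.v (f a)) (w.v (∑ i ∈ s, f i)) ≤ w.v (f a + ∑ i ∈ s, f i) :=
        w.min_le_add _ _
      rcases min_cases (w.v (f a)) (w.v (∑ i ∈ s, f i)) with ⟨he, _⟩ | ⟨he, _⟩ <;>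
        rw [he] at h3 <;>
        [exact le_trans h1 (add_le_add_left (nsmul_le_nsmul_right h3 n) c);
         exact le_trans h2 (add_le_add_left (nsmul_le_nsmul_right h3 n) c)]

lemma lt_nsmul_v_sum {ι : Type*} (s : Finset ι) (f : ι → K) {n : ℕ} (hn : n ≠ 0) (m c : WithTop Γ)
    (hm : m < ⊤) (h : ∀ i ∈ s, m < n • w.v (f i) + c) : m < n • w.v (∑ i ∈ s, f i) + c := by
  classical
  induction s using Finset.induction_on with
  | empty =>
      rw [Finset.sum_empty, w.v_zero, nsmul_top_eq hn, top_add]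
      exact hm
  | @insert a s ha ih =>
      rw [Finset.sum_insert ha]
      have h1 := h a (Finset.mem_insert_self a s)
      have h2 := ih (fun i hi => h i (Finset.mem_insert_of_mem hi))
      have h3 : min (w.v (f a)) (w.v (∑ i ∈ s, f i)) ≤ w.v (f a + ∑ i ∈ s, f i) :=
        w.min_le_add _ _
      rcases min_cases (w.v (f a)) (w.v (∑ i ∈ s, f i)) with ⟨he, _⟩ | ⟨he, _⟩ <;>
        rw [he] at h3 <;>
        [exact lt_of_lt_of_le h1 (add_le_add_left (nsmul_le_nsmul_right h3 n) c);
         exact lt_of_lt_of_le h2 (add_le_add_left (nsmul_le_nsmul_right h3 n) c)]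

end KrullValuation

section helpers

lemma add_lt_add_of_lt_of_le'' {a b c d : WithTop Γ} (hab : a < b) (hc : c ≠ ⊤)
    (hcd : c ≤ d) : a + c < b + d := by
  have ha : a ≠ ⊤ := hab.ne_top
  rcases eq_or_ne (b + d) ⊤ with h | h
  · rw [h]
    exact WithTop.lt_top_iff_ne_top.2 (WithTop.add_ne_top.2 ⟨ha, hc⟩)
  · rcases WithTop.add_ne_top.1 h with ⟨hb, hd⟩
    lift a to Γ using ha; lift b to Γ using hb; lift c to Γ using hc; lift d to Γ using hd
    exact_mod_cast add_lt_add_of_lt_of_le (by exact_mod_cast hab) (by exact_mod_cast hcd)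

lemma add_lt_add_of_le_of_lt'' {a b c d : WithTop Γ} (ha : a ≠ ⊤) (hab : a ≤ b)
    (hcd : c < d) : a + c < b + d := by
  rw [add_comm a c, add_comm b d]; exact add_lt_add_of_lt_of_le'' hcd ha hab

lemma lt_of_nsmul_lt_nsmul'' {x y : WithTop Γ} (n : ℕ) (h : n • x < n • y) :
    x < y := by
  by_contra hle
  exact absurd (nsmul_le_nsmul_right (not_lt.1 hle) n) (not_le.2 h)

/-- Existence of the min value of `F` on `[0, r]` together with first/last attaining indices. -/
lemma exists_minmax (F : ℕ → WithTop Γ) (r : ℕ)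
    (hfin : F r ≠ ⊤) (htop : ∀ i, r < i → F i = ⊤) :
    ∃ M i₀ i₁, i₀ ≤ r ∧ i₁ ≤ r ∧ F i₀ = M ∧ F i₁ = M ∧ M ≠ ⊤ ∧
      (∀ i, M ≤ F i) ∧ (∀ i, i < i₀ → M < F i) ∧ (∀ i, i₁ < i → M < F i) := by
  classical
  have hne : (Finset.range (r + 1)).Nonempty := ⟨0, Finset.mem_range.2 (Nat.succ_pos r)⟩
  set M := (Finset.range (r + 1)).inf' hne F with hM
  have hle : ∀ i, M ≤ F i := by
    intro i
    rcases le_or_gt i r with h | h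
    · exact Finset.inf'_le F (Finset.mem_range.2 (by omega))
    · rw [htop i h]; exact le_top
  have hMne : M ≠ ⊤ := ne_top_of_le_ne_top hfin (hle r)
  set S := (Finset.range (r + 1)).filter (fun i => F i = M) with hS
  have hSne : S.Nonempty := by
    obtain ⟨i, hi, hieq⟩ := Finset.exists_mem_eq_inf' hne F
    exact ⟨i, Finset.mem_filter.2 ⟨hi, hieq.symm⟩⟩
  refine ⟨M, S.min' hSne, S.max' hSne, ?_, ?_, ?_, ?_, hMne, hle, ?_, ?_⟩
  · have := Finset.mem_filter.1 (S.min'_mem hSne)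
    exact Nat.lt_succ_iff.1 (Finset.mem_range.1 this.1)
  · have := Finset.mem_filter.1 (S.max'_mem hSne)
    exact Nat.lt_succ_iff.1 (Finset.mem_range.1 this.1)
  · exact (Finset.mem_filter.1 (S.min'_mem hSne)).2
  · exact (Finset.mem_filter.1 (S.max'_mem hSne)).2
  · intro i hi
    have hir : i ≤ r := by
      have := Finset.mem_filter.1 (S.min'_mem hSne)
      have := Nat.lt_succ_iff.1 (Finset.mem_range.1 this.1)
      omega
    refine lt_of_le_of_ne (hle i) (fun h => ?_)
    have : i ∈ S := Finset.mem_filter.2 ⟨Finset.mem_range.2 (by omega), h.symm⟩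
    exact absurd (S.min'_le i this) (by omega)
  · intro i hi
    rcases le_or_gt i r with h | h
    · refine lt_of_le_of_ne (hle i) (fun heq => ?_)
      have : i ∈ S := Finset.mem_filter.2 ⟨Finset.mem_range.2 (by omega), heq.symm⟩
      exact absurd (S.le_max' i this) (by omega)
    · rw [htop i h]
      exact WithTop.lt_top_iff_ne_top.2 hMne

end helpers

theorem IsEisensteinDumas.irreducible {w : KrullValuation K Γ} {n : ℕ} {P : K[X]}
    (hED : IsEisensteinDumas w n P) : Irreducible P := by
  obtain ⟨hdeg, h0n, hD1, hD2⟩ := hED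
  have hn0 : n ≠ 0 := by
    rintro rfl
    exact hD1 2 one_lt_two (dvd_zero 2) 0 (by simp)
  have ha0 : P.coeff 0 ≠ 0 := left_ne_zero_of_mul h0n
  have han : P.coeff n ≠ 0 := right_ne_zero_of_mul h0n
  have hP0 : P ≠ 0 := fun h => ha0 (by simp [h])
  have hunit : ∀ D : K[X], D ≠ 0 → D.natDegree = 0 → IsUnit D := by
    intro D hD h0
    rw [eq_C_of_natDegree_eq_zero h0]
    exact isUnit_C.2 (Ne.isUnit fun hc => hD (by rw [eq_C_of_natDegree_eq_zero h0, hc, map_zero]))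
  constructor
  · exact fun hu => hn0 (hdeg ▸ natDegree_eq_zero_of_isUnit hu)
  intro B C hBC
  by_contra hcon
  push_neg at hcon
  obtain ⟨hB, hC⟩ := hcon
  subst hBC
  have hBne : B ≠ 0 := fun h => hP0 (by rw [h, zero_mul])
  have hCne : C ≠ 0 := fun h => hP0 (by rw [h, mul_zero])
  set r := B.natDegree with hr
  set s := C.natDegree with hs
  have hrs : r + s = n := by rw [hr, hs, ← natDegree_mul hBne hCne, hdeg]
  have hr1 : 1 ≤ r := Nat.one_le_iff_ne_zero.2 fun h => hB (hunit B hBne h)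
  have hs1 : 1 ≤ s := Nat.one_le_iff_ne_zero.2 fun h => hC (hunit C hCne h)
  have hb0 : B.coeff 0 ≠ 0 := fun h => ha0 (by rw [mul_coeff_zero, h, zero_mul])
  have hc0 : C.coeff 0 ≠ 0 := fun h => ha0 (by rw [mul_coeff_zero, h, mul_zero])
  have hbr : B.coeff r ≠ 0 := by
    show B.leadingCoeff ≠ 0
    exact leadingCoeff_ne_zero.2 hBne
  have hcs : C.coeff s ≠ 0 := by
    show C.leadingCoeff ≠ 0
    exact leadingCoeff_ne_zero.2 hCne
  obtain ⟨α₀, hα₀⟩ := WithTop.ne_top_iff_exists.1 (w.v_ne_top ha0)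
  obtain ⟨αn, hαn⟩ := WithTop.ne_top_iff_exists.1 (w.v_ne_top han)
  set μ := α₀ - αn with hμ
  set F : K[X] → ℕ → WithTop Γ := fun Q i => n • w.v (Q.coeff i) + ((i • μ : Γ) : WithTop Γ)
    with hF
  have Ftop : ∀ (Q : K[X]) i, Q.coeff i = 0 → F Q i = ⊤ := by
    intro Q i h
    simp only [hF, h, w.v_zero, KrullValuation.nsmul_top_eq hn0, top_add]
  have Ffin : ∀ (Q : K[X]) i, Q.coeff i ≠ 0 → F Q i ≠ ⊤ := by
    intro Q i h
    obtain ⟨γ, hγ⟩ := WithTop.ne_top_iff_exists.1 (w.v_ne_top h)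
    simp only [hF, ← hγ, ← WithTop.coe_nsmul, ← WithTop.coe_add]
    exact WithTop.coe_ne_top
  have key : ∀ (D E : K[X]) (p q : ℕ),
      n • w.v (D.coeff p * E.coeff q) + (((p + q) • μ : Γ) : WithTop Γ) = F D p + F E q := by
    intro D E p q
    simp only [hF, w.map_mul, nsmul_add, add_nsmul, WithTop.coe_add]
    abel
  obtain ⟨MB, i₀, i₁, hi₀r, hi₁r, hFi₀, hFi₁, hMBne, hMBle, hMBlt, hMBgt⟩ :=
    exists_minmax (F B) r (Ffin B r hbr)
      (fun i hi => Ftop B i (coeff_eq_zero_of_natDegree_lt hi))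
  obtain ⟨MC, j₀, j₁, hj₀s, hj₁s, hFj₀, hFj₁, hMCne, hMCle, hMClt, hMCgt⟩ :=
    exists_minmax (F C) s (Ffin C s hcs)
      (fun i hi => Ftop C i (coeff_eq_zero_of_natDegree_lt hi))
  -- (Pa) global lower bound for the product
  have hPa : ∀ k, MB + MC ≤ F (B * C) k := by
    intro k
    have hterm : ∀ x ∈ Finset.HasAntidiagonal.antidiagonal k,
        MB + MC ≤ n • w.v (B.coeff x.1 * C.coeff x.2) + ((k • μ : Γ) : WithTop Γ) := by
      rintro ⟨p, q⟩ hx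
      rw [Finset.HasAntidiagonal.mem_antidiagonal] at hx
      dsimp only
      rw [← hx, key]
      exact add_le_add (hMBle p) (hMCle q)
    have hsum := w.le_nsmul_v_sum (Finset.HasAntidiagonal.antidiagonal k) _ hn0 (MB + MC) _ hterm
    simp only [hF]
    rw [coeff_mul]
    exact hsum
  -- dominant-term equality
  have hdom : ∀ i' j', F B i' = MB → F C j' = MC →
      (∀ p q, p + q = i' + j' → (p, q) ≠ (i', j') →
        (MB < F B p ∧ MC ≤ F C q) ∨ (MB ≤ F B p ∧ MC < F C q)) →
      F (B * C) (i' + j') = MB + MC := by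
    intro i' j' hFi hFj hpq
    classical
    have hmainv : n • w.v (B.coeff i' * C.coeff j') + (((i' + j') • μ : Γ) : WithTop Γ)
        = MB + MC := by rw [key, hFi, hFj]
    have hrest : MB + MC < n • w.v (∑ x ∈ (Finset.HasAntidiagonal.antidiagonal (i' + j')).erase (i', j'),
        B.coeff x.1 * C.coeff x.2) + (((i' + j') • μ : Γ) : WithTop Γ) := by
      apply w.lt_nsmul_v_sum _ _ hn0 _ _
        (WithTop.lt_top_iff_ne_top.2 (WithTop.add_ne_top.2 ⟨hMBne, hMCne⟩))
      rintro ⟨p, q⟩ hx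
      rw [Finset.mem_erase, Finset.HasAntidiagonal.mem_antidiagonal] at hx
      obtain ⟨hne, hsum⟩ := hx
      dsimp only at hne hsum ⊢
      rw [show i' + j' = p + q from hsum.symm, key]
      rcases hpq p q hsum hne with ⟨h1, h2⟩ | ⟨h1, h2⟩
      · exact add_lt_add_of_lt_of_le'' h1 hMCne h2
      · exact add_lt_add_of_le_of_lt'' hMBne h1 h2
    have hlt : w.v (B.coeff i' * C.coeff j') <
        w.v (∑ x ∈ (Finset.HasAntidiagonal.antidiagonal (i' + j')).erase (i', j'),
          B.coeff x.1 * C.coeff x.2) := by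
      apply lt_of_nsmul_lt_nsmul'' n
      have := hrest
      rw [← hmainv] at this
      exact (WithTop.add_lt_add_iff_right WithTop.coe_ne_top).1 this
    have hadd := w.v_add_eq_left hlt
    have hmem : (i', j') ∈ Finset.HasAntidiagonal.antidiagonal (i' + j') := Finset.HasAntidiagonal.mem_antidiagonal.2 rfl
    simp only [hF]
    rw [coeff_mul, ← Finset.add_sum_erase _ _ hmem, hadd]
    exact hmainv
  -- (Pc) strict below the bottom corner
  have hPc : ∀ k, k < i₀ + j₀ → MB + MC < F (B * C) k := by
    intro k hk
    simp only [hF]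
    rw [coeff_mul]
    apply w.lt_nsmul_v_sum _ _ hn0 _ _
      (WithTop.lt_top_iff_ne_top.2 (WithTop.add_ne_top.2 ⟨hMBne, hMCne⟩))
    rintro ⟨p, q⟩ hx
    rw [Finset.HasAntidiagonal.mem_antidiagonal] at hx
    dsimp only at hx ⊢
    rw [← hx, key]
    have hor : p < i₀ ∨ q < j₀ := by omega
    rcases hor with h | h
    · exact add_lt_add_of_lt_of_le'' (hMBlt p h) hMCne (hMCle q)
    · exact add_lt_add_of_le_of_lt'' hMBne (hMBle p) (hMClt q h)
  -- (Pd) strict above the top corner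
  have hPd : ∀ k, i₁ + j₁ < k → MB + MC < F (B * C) k := by
    intro k hk
    simp only [hF]
    rw [coeff_mul]
    apply w.lt_nsmul_v_sum _ _ hn0 _ _
      (WithTop.lt_top_iff_ne_top.2 (WithTop.add_ne_top.2 ⟨hMBne, hMCne⟩))
    rintro ⟨p, q⟩ hx
    rw [Finset.HasAntidiagonal.mem_antidiagonal] at hx
    dsimp only at hx ⊢
    rw [← hx, key]
    have hor : i₁ < p ∨ j₁ < q := by omega
    rcases hor with h | h
    · exact add_lt_add_of_lt_of_le'' (hMBgt p h) hMCne (hMCle q)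
    · exact add_lt_add_of_le_of_lt'' hMBne (hMBle p) (hMCgt q h)
  -- ED lower bound
  have hEa : ∀ k, ((n • α₀ : Γ) : WithTop Γ) ≤ F (B * C) k := by
    intro k
    rcases le_or_gt k n with hk | hk
    · have h3 := add_le_add_left (hD2 k hk) ((k • μ : Γ) : WithTop Γ)
      refine le_trans (le_of_eq ?_) h3
      rw [← hα₀, ← hαn, ← WithTop.coe_nsmul, ← WithTop.coe_nsmul,
        ← WithTop.coe_add, ← WithTop.coe_add, WithTop.coe_eq_coe, hμ, smul_sub]
      have hnk : n - k + k = n := Nat.sub_add_cancel hk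
      calc n • α₀ = (n - k) • α₀ + k • α₀ := by rw [← add_nsmul, hnk]
        _ = (n - k) • α₀ + k • αn + (k • α₀ - k • αn) := by abel
    · rw [Ftop (B * C) k (coeff_eq_zero_of_natDegree_lt (by rw [hdeg]; exact hk))]
      exact le_top
  have hEb : F (B * C) 0 = ((n • α₀ : Γ) : WithTop Γ) := by
    simp only [hF]
    rw [← hα₀, ← WithTop.coe_nsmul, zero_nsmul, WithTop.coe_zero, add_zero]
  have hEc : F (B * C) n = ((n • α₀ : Γ) : WithTop Γ) := by
    simp only [hF]
    rw [← hαn, ← WithTop.coe_nsmul, ← WithTop.coe_add,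
      WithTop.coe_eq_coe, hμ, smul_sub]
    abel
  -- corners of the product
  have hbot : F (B * C) (i₀ + j₀) = MB + MC := by
    apply hdom i₀ j₀ hFi₀ hFj₀
    intro p q hsum hne
    have hne' : p ≠ i₀ ∨ q ≠ j₀ := by
      by_contra hcon
      push_neg at hcon
      exact hne (by rw [hcon.1, hcon.2])
    have hor : p < i₀ ∨ q < j₀ := by omega
    rcases hor with h | h
    · exact Or.inl ⟨hMBlt p h, hMCle q⟩
    · exact Or.inr ⟨hMBle p, hMClt q h⟩
  have htopc : F (B * C) (i₁ + j₁) = MB + MC := by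
    apply hdom i₁ j₁ hFi₁ hFj₁
    intro p q hsum hne
    have hne' : p ≠ i₁ ∨ q ≠ j₁ := by
      by_contra hcon
      push_neg at hcon
      exact hne (by rw [hcon.1, hcon.2])
    have hor : i₁ < p ∨ j₁ < q := by omega
    rcases hor with h | h
    · exact Or.inl ⟨hMBgt p h, hMCle q⟩
    · exact Or.inr ⟨hMBle p, hMCgt q h⟩
  have hM : MB + MC = ((n • α₀ : Γ) : WithTop Γ) := by
    refine le_antisymm (hEb ▸ hPa 0) ?_
    calc ((n • α₀ : Γ) : WithTop Γ) ≤ F (B * C) (i₀ + j₀) := hEa _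
      _ = MB + MC := hbot
  have hij0 : i₀ + j₀ = 0 := by
    by_contra h
    have h2 : MB + MC < F (B * C) 0 := hPc 0 (Nat.pos_of_ne_zero h)
    rw [hEb, ← hM] at h2
    exact lt_irrefl _ h2
  have hij1 : n ≤ i₁ + j₁ := by
    by_contra h
    have h2 : MB + MC < F (B * C) n := hPd n (lt_of_not_ge h)
    rw [hEc, ← hM] at h2
    exact lt_irrefl _ h2
  have hi₀0 : i₀ = 0 := by omega
  have hi₁r' : i₁ = r := by omega
  rw [hi₀0] at hFi₀
  rw [hi₁r'] at hFi₁
  -- extract the Γ-equation  n•β₀ = n•βr + r•μ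
  obtain ⟨β₀, hβ₀⟩ := WithTop.ne_top_iff_exists.1 (w.v_ne_top hb0)
  obtain ⟨βr, hβr⟩ := WithTop.ne_top_iff_exists.1 (w.v_ne_top hbr)
  have heq : (n • β₀ : Γ) = n • βr + r • μ := by
    have h1 : F B 0 = F B r := by rw [hFi₀, hFi₁]
    simp only [hF] at h1
    rw [← hβ₀, ← hβr, ← WithTop.coe_nsmul, ← WithTop.coe_nsmul, zero_nsmul, WithTop.coe_zero,
      add_zero, ← WithTop.coe_add, WithTop.coe_eq_coe] at h1
    exact h1
  set g := β₀ - βr with hg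
  have hrμ : r • μ = n • g := by
    have h1 : r • μ = n • β₀ - n • βr := by rw [heq]; abel
    rw [h1, hg, smul_sub]
  -- number theory: μ ∈ n' Γ for n' = n / gcd(r,n) ≥ 2 dividing n
  set d := Nat.gcd r n with hd
  have hdpos : 0 < d := Nat.gcd_pos_of_pos_left n hr1
  set r' := r / d with hr'
  set n' := n / d with hn'
  have hdr : d * r' = r := Nat.mul_div_cancel' (Nat.gcd_dvd_left r n)
  have hdn : d * n' = n := Nat.mul_div_cancel' (Nat.gcd_dvd_right r n)
  have hcop : Nat.Coprime r' n' := Nat.coprime_div_gcd_div_gcd hdpos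
  clear_value d r' n'
  have hn'2 : 2 ≤ n' := by
    have h1 : r' ≠ 0 := by
      rintro h
      rw [h, mul_zero] at hdr
      omega
    have h2 : r < n := by omega
    have h3 : r' < n' := by
      have : d * r' < d * n' := by rw [hdr, hdn]; exact h2
      exact Nat.lt_of_mul_lt_mul_left this
    omega
  have hmono : ∀ x y : Γ, x < y → d • x < d • y := by
    intro x y hxy
    have h0 : (0 : Γ) < d • (y - x) := nsmul_pos (sub_pos.2 hxy) hdpos.ne'
    rw [smul_sub] at h0
    exact sub_pos.1 h0
  have hinj : ∀ x y : Γ, d • x = d • y → x = y := by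
    intro x y hxy
    by_contra hne
    rcases lt_or_gt_of_ne hne with h | h
    · exact absurd hxy (ne_of_lt (hmono _ _ h))
    · exact absurd hxy (ne_of_gt (hmono _ _ h))
  have hr'μ : r' • μ = n' • g := by
    apply hinj
    rw [smul_smul, smul_smul, hdr, hdn, hrμ]
  have hbez := Nat.gcd_eq_gcd_ab r' n'
  rw [Nat.Coprime] at hcop
  rw [hcop] at hbez
  set u := Nat.gcdA r' n' with hu
  set t := Nat.gcdB r' n' with ht
  have hμn' : μ = n' • (u • g + t • μ) := by
    have h1 : μ = ((r' : ℤ) * u + (n' : ℤ) * t) • μ := by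
      rw [← hbez, Nat.cast_one, one_smul]
    calc μ = ((r' : ℤ) * u + (n' : ℤ) * t) • μ := h1
      _ = u • ((r' : ℤ) • μ) + (n' : ℤ) • (t • μ) := by
        rw [add_smul, mul_comm (r' : ℤ) u, mul_smul, mul_smul]
      _ = u • ((n' : ℕ) • g) + (n' : ℤ) • (t • μ) := by
        rw [natCast_zsmul, hr'μ]
      _ = (n' : ℤ) • (u • g) + (n' : ℤ) • (t • μ) := by
        rw [← natCast_zsmul, smul_comm u ((n' : ℤ))]
      _ = (n' : ℤ) • (u • g + t • μ) := by rw [smul_add]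
      _ = n' • (u • g + t • μ) := natCast_zsmul _ _
  have hdvd : n' ∣ n := ⟨d, by rw [← hdn]; ring⟩
  apply hD1 n' hn'2 hdvd (u • g + t • μ)
  rw [← hα₀, ← hαn, ← WithTop.coe_add, WithTop.coe_eq_coe, ← hμn', hμ]
  abel

noncomputable def Tpoly (c : K) (m : ℕ) (P : K[X]) : K[X] :=
  ∑ i ∈ Finset.range (m + 1), C (P.coeff i) * X ^ i * (1 - C c * X) ^ (m - i)


lemma one_sub_ne (c : K) : (1 - C c * X : K[X]) ≠ 0 := fun h => by
  have h0 := congrArg (fun p => Polynomial.coeff p 0) h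
  simp at h0

lemma Tpoly_image (c : K) (m : ℕ) (P : K[X]) (hP : P.natDegree ≤ m) :
    algebraMap K[X] (RatFunc K) (Tpoly c m P) =
      (algebraMap K[X] (RatFunc K) (1 - C c * X)) ^ m *
        Polynomial.aeval (RatFunc.X / algebraMap K[X] (RatFunc K) (1 - C c * X)) P := by
  have hu' : algebraMap K[X] (RatFunc K) (1 - C c * X) ≠ 0 :=
    (map_ne_zero_iff _ (IsFractionRing.injective K[X] (RatFunc K))).2 (one_sub_ne c)
  rw [Polynomial.aeval_eq_sum_range' (Nat.lt_succ_of_le hP), Finset.mul_sum]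
  rw [Tpoly, map_sum]
  refine Finset.sum_congr rfl ?_
  intro i hi
  rw [Finset.mem_range, Nat.lt_succ_iff] at hi
  rw [map_mul, map_mul, map_pow, map_pow, RatFunc.algebraMap_X]
  rw [Algebra.smul_def, IsScalarTower.algebraMap_apply K K[X] (RatFunc K),
    Polynomial.algebraMap_eq]
  rw [div_pow]
  rw [pow_sub₀ _ hu' hi, div_eq_mul_inv]
  ring

lemma Tpoly_mul (c : K) (rB sD : ℕ) (B D : K[X]) (hB : B.natDegree ≤ rB)
    (hD : D.natDegree ≤ sD) :
    Tpoly c (rB + sD) (B * D) = Tpoly c rB B * Tpoly c sD D := by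
  apply IsFractionRing.injective K[X] (RatFunc K)
  rw [map_mul, Tpoly_image c _ _ (le_trans (natDegree_mul_le) (add_le_add hB hD)),
    Tpoly_image c _ _ hB, Tpoly_image c _ _ hD, map_mul, pow_add]
  ring

lemma Tpoly_natDegree_le (c : K) (m : ℕ) (P : K[X]) : (Tpoly c m P).natDegree ≤ m := by
  apply natDegree_sum_le_of_forall_le
  intro i hi
  rw [Finset.mem_range, Nat.lt_succ_iff] at hi
  refine le_trans natDegree_mul_le ?_
  have h1 : (C (P.coeff i) * X ^ i).natDegree ≤ i :=
    le_trans natDegree_mul_le (by simp)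
  have h2 : ((1 - C c * X) ^ (m - i)).natDegree ≤ (m - i) * 1 := by
    refine le_trans natDegree_pow_le (Nat.mul_le_mul_left _ ?_)
    refine le_trans (natDegree_sub_le _ _) ?_
    simp [natDegree_C_mul_le]
    exact le_trans (natDegree_mul_le) (by simp)
  omega


lemma IsEisensteinDumas.n_ne_zero {w : KrullValuation K Γ} {n : ℕ} {P : K[X]}
    (h : IsEisensteinDumas w n P) : n ≠ 0 := by
  rintro rfl
  exact h.2.2.1 2 one_lt_two (dvd_zero 2) 0 (by simp)

/-- If `U(A(x))` or `L(A(x))` is an Eisenstein–Dumas polynomial at a nontrivial Krull valuation,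
then `A(x)` is irreducible in `K[x]`. -/
theorem irreducible_of_UL_eisensteinDumas (w : KrullValuation K Γ) (hw : w.IsNontrivial)
    (n : ℕ) (A : K[X]) (hdeg : A.natDegree = n) (hA : A ≠ 0)
    (h : IsEisensteinDumas w n (Upoly n A) ∨ IsEisensteinDumas w n (Lpoly n A)) :
    Irreducible A := by
  have hunit : ∀ D : K[X], D ≠ 0 → D.natDegree = 0 → IsUnit D := by
    intro D hD h0
    rw [eq_C_of_natDegree_eq_zero h0]
    exact isUnit_C.2 (Ne.isUnit fun hc => hD (by rw [eq_C_of_natDegree_eq_zero h0, hc, map_zero]))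
  have hnotunit : ∀ D : K[X], ¬ IsUnit D → D ≠ 0 → 1 ≤ D.natDegree :=
    fun D h1 h2 => Nat.one_le_iff_ne_zero.2 fun h0 => h1 (hunit D h2 h0)
  rcases h with hU | hL
  · have hirr := hU.irreducible
    have hn0 : n ≠ 0 := hU.n_ne_zero
    constructor
    · intro hu
      exact hn0 (by rw [← hdeg, natDegree_eq_zero_of_isUnit hu])
    · intro B D hBD
      by_contra hcon
      push_neg at hcon
      obtain ⟨hB, hD⟩ := hcon
      have hBne : B ≠ 0 := fun h0 => hA (by rw [hBD, h0, zero_mul])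
      have hDne : D ≠ 0 := fun h0 => hA (by rw [hBD, h0, mul_zero])
      have hB1 := hnotunit B hB hBne
      have hD1 := hnotunit D hD hDne
      have hcomp : Upoly n A =
          B.comp (X - C (A.coeff (n - 1) / ((n : K) * A.coeff n))) *
            D.comp (X - C (A.coeff (n - 1) / ((n : K) * A.coeff n))) := by
        rw [Upoly, hBD, mul_comp]
      rcases hirr.isUnit_or_isUnit hcomp with h1 | h1
      · have h2 := natDegree_eq_zero_of_isUnit h1
        rw [natDegree_comp, natDegree_X_sub_C, mul_one] at h2
        omega
      · have h2 := natDegree_eq_zero_of_isUnit h1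
        rw [natDegree_comp, natDegree_X_sub_C, mul_one] at h2
        omega
  · have hirr := hL.irreducible
    have hn0 : n ≠ 0 := hL.n_ne_zero
    constructor
    · intro hu
      exact hn0 (by rw [← hdeg, natDegree_eq_zero_of_isUnit hu])
    · intro B D hBD
      by_contra hcon
      push_neg at hcon
      obtain ⟨hB, hD⟩ := hcon
      have hBne : B ≠ 0 := fun h0 => hA (by rw [hBD, h0, zero_mul])
      have hDne : D ≠ 0 := fun h0 => hA (by rw [hBD, h0, mul_zero])
      have hB1 := hnotunit B hB hBne
      have hD1 := hnotunit D hD hDne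
      have hrs : B.natDegree + D.natDegree = n := by
        rw [← natDegree_mul hBne hDne, ← hBD, hdeg]
      set c := A.coeff 1 / ((n : K) * A.coeff 0) with hc
      have hmul : Lpoly n A = Tpoly c B.natDegree B * Tpoly c D.natDegree D := by
        calc Lpoly n A = Tpoly c n A := rfl
          _ = Tpoly c (B.natDegree + D.natDegree) (B * D) := by rw [hrs, ← hBD]
          _ = Tpoly c B.natDegree B * Tpoly c D.natDegree D :=
              Tpoly_mul c _ _ B D le_rfl le_rfl
      have hLne : Lpoly n A ≠ 0 := fun h0 => hL.2.1 (by rw [h0]; simp)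
      have hT1ne : Tpoly c B.natDegree B ≠ 0 := fun h0 => hLne (by rw [hmul, h0, zero_mul])
      have hT2ne : Tpoly c D.natDegree D ≠ 0 := fun h0 => hLne (by rw [hmul, h0, mul_zero])
      have hdegsum : (Tpoly c B.natDegree B).natDegree + (Tpoly c D.natDegree D).natDegree = n := by
        rw [← natDegree_mul hT1ne hT2ne, ← hmul, hL.1]
      have hle1 := Tpoly_natDegree_le c B.natDegree B
      have hle2 := Tpoly_natDegree_le c D.natDegree D
      rcases hirr.isUnit_or_isUnit hmul with h1 | h1
      · have h2 := natDegree_eq_zero_of_isUnit h1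
        omega
      · have h2 := natDegree_eq_zero_of_isUnit h1
        omega
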